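/- Let 𝓛 = {f_λ : λ > 0} where f_λ(x) = 1/(x+λ) on [0,∞), let 𝟙 denote the constant function 1, and let 𝓐 be the closure in the sup-norm of the linear span of 𝓛 ∪ {𝟙}. Then 𝓐 equals the set of continuous functions on [0,∞) which have a (finite) limit at infinity. -/

import Mathlib

open Filter NNReal

section Aux

open BoundedContinuousFunction Polynomial

/-- The resolvent function `x ↦ 1/(x+l)` as a bounded continuous function on `ℝ≥0`. -/
noncomputable def resolv (l : ℝ) (hl : 0 < l) : BoundedContinuousFunction ℝ≥0 ℝ :=
  BoundedContinuousFunction.ofNormedAddCommGroup (fun x : ℝ≥0 => 1 / ((x : ℝ) + l))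
    (by
      apply continuous_const.div
      · continuity
      · intro x; positivity)
    (1 / l)
    (by
      intro x
      have hx : (0:ℝ) ≤ x := x.2
      rw [Real.norm_eq_abs, abs_of_nonneg (by positivity)]
      apply div_le_div_of_nonneg_left one_pos.le hl
      linarith)

@[simp] lemma resolv_apply (l : ℝ) (hl : 0 < l) (x : ℝ≥0) :
    resolv l hl x = 1 / ((x : ℝ) + l) := rfl

lemma resolv_mul (l m : ℝ) (hl : 0 < l) (hm : 0 < m) (h : l ≠ m) :
    resolv l hl * resolv m hm = (m - l)⁻¹ • (resolv l hl - resolv m hm) := by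
  ext x
  have hx : (0:ℝ) ≤ x := x.2
  have h1 : (x:ℝ) + l ≠ 0 := by positivity
  have h2 : (x:ℝ) + m ≠ 0 := by positivity
  have h3 : m - l ≠ 0 := sub_ne_zero.mpr (Ne.symm h)
  simp only [BoundedContinuousFunction.coe_mul, BoundedContinuousFunction.coe_smul,
    BoundedContinuousFunction.coe_sub, Pi.mul_apply, Pi.smul_apply, Pi.sub_apply,
    resolv_apply, smul_eq_mul]
  field_simp
  ring

lemma resolv_dist (l m : ℝ) (hl : 0 < l) (hm : 0 < m) :
    ‖resolv l hl - resolv m hm‖ ≤ |l - m| / (l * m) := by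
  apply BoundedContinuousFunction.norm_le (by positivity) |>.mpr
  intro x
  have hx : (0:ℝ) ≤ x := x.2
  have h1 : (0:ℝ) < (x:ℝ) + l := by positivity
  have h2 : (0:ℝ) < (x:ℝ) + m := by positivity
  simp only [BoundedContinuousFunction.coe_sub, Pi.sub_apply, resolv_apply]
  rw [Real.norm_eq_abs, div_sub_div _ _ h1.ne' h2.ne']
  have e : (1 * ((x:ℝ) + m) - ((x:ℝ)+l) * 1) = m - l := by ring
  rw [e, abs_div, abs_of_pos (mul_pos h1 h2), abs_sub_comm]
  have hlm : l * m ≤ ((x:ℝ)+l) * ((x:ℝ)+m) := by nlinarith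
  exact div_le_div_of_nonneg_left (abs_nonneg _) (by positivity) hlm

/-- Evaluation at a point, as an algebra homomorphism. -/
noncomputable def evalAH (x : ℝ≥0) : BoundedContinuousFunction ℝ≥0 ℝ →ₐ[ℝ] ℝ where
  toFun g := g x
  map_one' := rfl
  map_mul' _ _ := rfl
  map_zero' := rfl
  map_add' _ _ := rfl
  commutes' _ := rfl

lemma isClosed_conv :
    IsClosed {f : BoundedContinuousFunction ℝ≥0 ℝ | ∃ L : ℝ, Tendsto f atTop (nhds L)} := by
  have hiff : {f : BoundedContinuousFunction ℝ≥0 ℝ | ∃ L : ℝ, Tendsto f atTop (nhds L)}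
      = {f : BoundedContinuousFunction ℝ≥0 ℝ | Cauchy (Filter.map f atTop)} := by
    ext f
    exact (cauchy_map_iff_exists_tendsto).symm
  rw [hiff]
  refine isClosed_of_closure_subset ?_
  intro f hf
  show Cauchy _
  rw [Metric.cauchy_iff]
  refine ⟨Filter.map_neBot, ?_⟩
  intro ε hε
  obtain ⟨g, hg, hfg⟩ := Metric.mem_closure_iff.mp hf (ε/3) (by linarith)
  obtain ⟨L, hL⟩ := cauchy_map_iff_exists_tendsto.mp hg
  have hev : ∀ᶠ x in atTop, dist (g x) L < ε/6 :=
    (Metric.tendsto_nhds.mp hL) (ε/6) (by linarith)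
  refine ⟨f '' {x | dist (g x) L < ε/6}, ?_, ?_⟩
  · exact Filter.image_mem_map hev
  · rintro a ⟨x, hx, rfl⟩ b ⟨y, hy, rfl⟩
    have h1 : dist (f x) (g x) < ε/3 := (BoundedContinuousFunction.dist_coe_le_dist x).trans_lt hfg
    have h2 : dist (f y) (g y) < ε/3 := (BoundedContinuousFunction.dist_coe_le_dist y).trans_lt hfg
    have h3 : dist (g x) (g y) ≤ dist (g x) L + dist L (g y) := dist_triangle _ _ _
    have h4 : dist L (g y) < ε/6 := by rw [dist_comm]; exact hy
    calc dist (f x) (f y) ≤ dist (f x) (g x) + dist (g x) (g y) + dist (g y) (f y) :=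
          dist_triangle4 _ _ _ _
      _ < ε/3 + (ε/6 + ε/6) + ε/3 := by
          rw [dist_comm (g y) (f y)]
          refine add_lt_add (add_lt_add_of_lt_of_le h1 (h3.trans ?_)) h2
          exact le_of_lt (add_lt_add hx h4) |>.trans (le_refl _)
      _ = ε := by ring

lemma cont_k (f : BoundedContinuousFunction ℝ≥0 ℝ) (L : ℝ) (hL : Tendsto f atTop (nhds L)) :
    ContinuousOn (fun t : ℝ => if t ≤ 0 then L else f (Real.toNNReal ((1 - t) / t)))
      (Set.Icc 0 1) := by
  set k : ℝ → ℝ := fun t => if t ≤ 0 then L else f (Real.toNNReal ((1 - t) / t)) with hk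
  intro t ht
  rcases eq_or_lt_of_le ht.1 with h0 | h0
  · subst h0
    have hk0 : k 0 = L := by simp [hk]
    rw [ContinuousWithinAt, hk0]
    have hmono : nhdsWithin (0:ℝ) (Set.Icc 0 1) ≤ nhdsWithin 0 (Set.Ici 0) :=
      nhdsWithin_mono _ Set.Icc_subset_Ici_self
    refine Tendsto.mono_left ?_ hmono
    have hIci : Set.Ici (0:ℝ) = {0} ∪ Set.Ioi 0 := by
      ext s; simp [le_iff_lt_or_eq, Set.mem_Ioi, eq_comm, or_comm]
    rw [hIci, nhdsWithin_union]
    rw [Filter.tendsto_sup]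
    constructor
    · rw [nhdsWithin_singleton]
      have hp := tendsto_pure_nhds k 0
      rwa [hk0] at hp
    · have h1 : Tendsto (fun t : ℝ => (1 - t) / t) (nhdsWithin 0 (Set.Ioi 0)) atTop := by
        have e : ∀ t ∈ Set.Ioi (0:ℝ), (1 - t) / t = 1 / t + (-1) := by
          intro t ht'
          have htne : t ≠ 0 := ne_of_gt ht'
          field_simp
          ring
        have base : Tendsto (fun t : ℝ => 1 / t + (-1)) (nhdsWithin 0 (Set.Ioi 0)) atTop := by
          refine tendsto_atTop_add_const_right _ (-1) ?_
          have hinv : Tendsto (fun t : ℝ => t⁻¹) (nhdsWithin 0 (Set.Ioi 0)) atTop :=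
            tendsto_inv_nhdsGT_zero
          exact hinv.congr fun t => (one_div t).symm
        exact base.congr' (eventually_nhdsWithin_of_forall fun t ht' => (e t ht').symm)
      have h2 : Tendsto (fun t : ℝ => f (Real.toNNReal ((1 - t) / t)))
          (nhdsWithin 0 (Set.Ioi 0)) (nhds L) :=
        hL.comp (tendsto_real_toNNReal_atTop.comp h1)
      refine h2.congr' ?_
      exact eventually_nhdsWithin_of_forall fun s hs => by
        simp only [hk, if_neg (not_le.mpr (Set.mem_Ioi.mp hs))]
  · refine ContinuousAt.continuousWithinAt ?_
    have hmem : Set.Ioi (0:ℝ) ∈ nhds t := isOpen_Ioi.mem_nhds h0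
    have hev : (fun s : ℝ => f (Real.toNNReal ((1 - s) / s))) =ᶠ[nhds t] k := by
      filter_upwards [hmem] with s hs
      simp [hk, if_neg (not_le.mpr (Set.mem_Ioi.mp hs))]
    refine ContinuousAt.congr ?_ hev
    exact f.continuous.continuousAt.comp <| continuous_real_toNNReal.continuousAt.comp <|
      ContinuousAt.div (by fun_prop) continuousAt_id (ne_of_gt h0)

end Aux

/-- Let `𝓛 = {f_λ : λ > 0}` with `f_λ(x) = 1/(x+λ)` on `[0,∞)` (bounded
continuous functions on `ℝ≥0`), let `𝟙` be the constant function one, and let `𝓐` be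
the sup-norm closure of the linear span of `𝓛 ∪ {𝟙}`.  Then `𝓐` is exactly the set of
continuous functions on `[0,∞)` having a finite limit at infinity. -/
theorem closure_span_resolvents_eq_converging_functions :
    closure (↑(Submodule.span ℝ
        ({f : BoundedContinuousFunction ℝ≥0 ℝ |
            (∃ l : ℝ, 0 < l ∧ ∀ x : ℝ≥0, f x = 1 / ((x : ℝ) + l)) ∨
            (∀ x : ℝ≥0, f x = 1)})) : Set (BoundedContinuousFunction ℝ≥0 ℝ))
      = {f : BoundedContinuousFunction ℝ≥0 ℝ | ∃ L : ℝ, Tendsto f atTop (nhds L)} := by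
  classical
  open BoundedContinuousFunction Polynomial in
  set S : Set (BoundedContinuousFunction ℝ≥0 ℝ) :=
    {f : BoundedContinuousFunction ℝ≥0 ℝ |
        (∃ l : ℝ, 0 < l ∧ ∀ x : ℝ≥0, f x = 1 / ((x : ℝ) + l)) ∨
        (∀ x : ℝ≥0, f x = 1)} with hS
  set A := (Submodule.span ℝ S).topologicalClosure with hA
  have hAc : closure ((Submodule.span ℝ S : Submodule ℝ _) :
      Set (BoundedContinuousFunction ℝ≥0 ℝ)) = (A : Set (BoundedContinuousFunction ℝ≥0 ℝ)) :=
    (Submodule.topologicalClosure_coe _)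
  -- basic memberships
  have hresS : ∀ (l : ℝ) (hl : 0 < l), resolv l hl ∈ S := fun l hl =>
    Or.inl ⟨l, hl, fun x => rfl⟩
  have honeS : (1 : BoundedContinuousFunction ℝ≥0 ℝ) ∈ S := Or.inr fun x => rfl
  have hle : Submodule.span ℝ S ≤ A := Submodule.le_topologicalClosure _
  set f1 := resolv 1 one_pos with hf1
  -- f1 * f1 ∈ A
  have hsq : f1 * f1 ∈ A := by
    have hm : ∀ n : ℕ, (0:ℝ) < 1 + ((n:ℝ)+1)⁻¹ := fun n => by positivity
    have hconv : Tendsto (fun n : ℕ => resolv (1 + ((n:ℝ)+1)⁻¹) (hm n)) atTop (nhds f1) := by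
      rw [tendsto_iff_dist_tendsto_zero]
      refine squeeze_zero (fun n => dist_nonneg) (g := fun n : ℕ => ((n:ℝ)+1)⁻¹) ?_ ?_
      · intro n
        rw [dist_eq_norm]
        refine (resolv_dist _ _ _ _).trans ?_
        have h1 : |1 + ((n:ℝ)+1)⁻¹ - 1| = ((n:ℝ)+1)⁻¹ := by
          rw [add_sub_cancel_left, abs_of_nonneg (by positivity)]
        rw [h1]
        have hd : (1:ℝ) ≤ (1 + ((n:ℝ)+1)⁻¹) * 1 := by
          rw [mul_one]
          have : (0:ℝ) ≤ ((n:ℝ)+1)⁻¹ := by positivity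
          linarith
        exact div_le_self (by positivity) hd
      · exact tendsto_one_div_add_atTop_nhds_zero_nat.congr fun n => by rw [one_div]
    have hmul : Tendsto (fun n : ℕ => f1 * resolv (1 + ((n:ℝ)+1)⁻¹) (hm n)) atTop
        (nhds (f1 * f1)) := tendsto_const_nhds.mul hconv
    refine (Submodule.isClosed_topologicalClosure _).mem_of_tendsto hmul ?_
    refine Filter.Eventually.of_forall fun n => ?_
    have hne : (1:ℝ) ≠ 1 + ((n:ℝ)+1)⁻¹ := by
      have : (0:ℝ) < ((n:ℝ)+1)⁻¹ := by positivity
      linarith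
    rw [hf1, resolv_mul 1 _ one_pos (hm n) hne]
    exact hle (Submodule.smul_mem _ _ (Submodule.sub_mem _
      (Submodule.subset_span (hresS _ _)) (Submodule.subset_span (hresS _ _))))
  -- multiplication by f1 preserves A
  have hmulA : ∀ g ∈ A, g * f1 ∈ A := by
    set P := A.comap (LinearMap.mulRight ℝ f1) with hP
    have hPclosed : IsClosed (P : Set (BoundedContinuousFunction ℝ≥0 ℝ)) := by
      have hP2 : (P : Set (BoundedContinuousFunction ℝ≥0 ℝ))
          = (fun g => g * f1) ⁻¹' (A : Set (BoundedContinuousFunction ℝ≥0 ℝ)) := rfl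
      rw [hP2]
      exact (Submodule.isClosed_topologicalClosure _).preimage
        (continuous_id.mul continuous_const)
    have hspanP : Submodule.span ℝ S ≤ P := by
      rw [Submodule.span_le]
      intro f hf
      rcases hf with ⟨l, hl, hfx⟩ | hfx
      · have hfr : f = resolv l hl := by ext x; rw [hfx x]; rfl
        subst hfr
        show resolv l hl * f1 ∈ A
        by_cases hl1 : l = 1
        · subst hl1
          exact hsq
        · rw [hf1, resolv_mul l 1 hl one_pos hl1]
          exact hle (Submodule.smul_mem _ _ (Submodule.sub_mem _
            (Submodule.subset_span (hresS _ _)) (Submodule.subset_span (hresS _ _))))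
      · have hfr : f = 1 := by ext x; rw [hfx x]; rfl
        subst hfr
        show (1 : BoundedContinuousFunction ℝ≥0 ℝ) * f1 ∈ A
        rw [one_mul]
        exact hle (Submodule.subset_span (hresS _ _))
    intro g hg
    exact Submodule.topologicalClosure_minimal _ hspanP hPclosed hg
  -- powers of f1
  have hpow : ∀ n : ℕ, f1 ^ n ∈ A := by
    intro n
    induction n with
    | zero =>
      rw [pow_zero]
      exact hle (Submodule.subset_span honeS)
    | succ n ih =>
      rw [pow_succ]
      exact hmulA _ ih
  -- polynomials of f1
  have haeval : ∀ p : ℝ[X], Polynomial.aeval f1 p ∈ A := by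
    intro p
    induction p using Polynomial.induction_on' with
    | add p q hp hq => rw [map_add]; exact Submodule.add_mem _ hp hq
    | monomial n a =>
      rw [Polynomial.aeval_monomial, ← Algebra.smul_def]
      exact Submodule.smul_mem _ _ (hpow n)
  -- pointwise evaluation of polynomials
  have heval : ∀ (p : ℝ[X]) (x : ℝ≥0),
      (Polynomial.aeval f1 p) x = Polynomial.eval (f1 x) p := by
    intro p x
    have h := Polynomial.aeval_algHom_apply (evalAH x) f1 p
    have h2 : evalAH x f1 = f1 x := rfl
    rw [h2] at h
    have h3 : (Polynomial.aeval f1 p) x = (evalAH x) (Polynomial.aeval f1 p) := rfl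
    rw [h3, ← h]
    exact congrFun (Polynomial.coe_aeval_eq_eval _) p
  -- main equality
  apply Set.Subset.antisymm
  · -- easy inclusion
    have hM : Submodule ℝ (BoundedContinuousFunction ℝ≥0 ℝ) := ⊥
    set M : Submodule ℝ (BoundedContinuousFunction ℝ≥0 ℝ) :=
      { carrier := {f | ∃ L : ℝ, Tendsto f atTop (nhds L)}
        add_mem' := by
          rintro f g ⟨L1, h1⟩ ⟨L2, h2⟩
          exact ⟨L1 + L2, by
            have := h1.add h2
            simpa [BoundedContinuousFunction.coe_add, Pi.add_def] using this⟩
        zero_mem' := ⟨0, by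
          simp only [BoundedContinuousFunction.coe_zero]
          exact tendsto_const_nhds⟩
        smul_mem' := by
          rintro c f ⟨L, h⟩
          exact ⟨c * L, by
            have := h.const_mul c
            simpa [BoundedContinuousFunction.coe_smul, smul_eq_mul] using this⟩ } with hM
    have hSM : S ⊆ (M : Set (BoundedContinuousFunction ℝ≥0 ℝ)) := by
      intro f hf
      rcases hf with ⟨l, hl, hfx⟩ | hfx
      · refine ⟨0, ?_⟩
        have hfe : ⇑f = fun x : ℝ≥0 => 1 / ((x:ℝ) + l) := funext hfx
        rw [hfe]
        have h1 : Tendsto (fun x : ℝ≥0 => (x:ℝ) + l) atTop atTop :=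
          tendsto_atTop_add_const_right _ l (NNReal.tendsto_coe_atTop.mpr tendsto_id)
        have h2 := tendsto_inv_atTop_zero.comp h1
        simpa [one_div, Function.comp_def] using h2
      · refine ⟨1, ?_⟩
        have hfe : ⇑f = fun _ : ℝ≥0 => (1:ℝ) := funext hfx
        rw [hfe]
        exact tendsto_const_nhds
    have hsub : (Submodule.span ℝ S : Set (BoundedContinuousFunction ℝ≥0 ℝ))
        ⊆ (M : Set (BoundedContinuousFunction ℝ≥0 ℝ)) := Submodule.span_le.mpr hSM
    calc closure ((Submodule.span ℝ S : Submodule ℝ _) : Set (BoundedContinuousFunction ℝ≥0 ℝ))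
        ⊆ closure (M : Set (BoundedContinuousFunction ℝ≥0 ℝ)) := closure_mono hsub
      _ = (M : Set (BoundedContinuousFunction ℝ≥0 ℝ)) := isClosed_conv.closure_eq
  · -- hard inclusion
    rintro f ⟨L, hL⟩
    rw [← closure_closure (s := ((Submodule.span ℝ S : Submodule ℝ _) :
      Set (BoundedContinuousFunction ℝ≥0 ℝ)))]
    rw [Metric.mem_closure_iff]
    intro ε hε
    obtain ⟨p, hp⟩ := exists_polynomial_near_of_continuousOn 0 1
      (fun t : ℝ => if t ≤ 0 then L else f (Real.toNNReal ((1 - t) / t)))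
      (cont_k f L hL) (ε/2) (by linarith)
    refine ⟨Polynomial.aeval f1 p, ?_, ?_⟩
    · rw [hAc]
      exact haeval p
    · have hdle : dist f (Polynomial.aeval f1 p) ≤ ε/2 := by
        rw [BoundedContinuousFunction.dist_le (by linarith)]
        intro x
        have hx : (0:ℝ) ≤ x := x.2
        set t : ℝ := 1 / ((x:ℝ) + 1) with htdef
        have hxpos : (0:ℝ) < (x:ℝ) + 1 := by positivity
        have ht0 : 0 < t := by rw [htdef]; positivity
        have ht1 : t ≤ 1 := by
          rw [htdef]
          rw [div_le_one hxpos]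
          linarith
        have htmem : t ∈ Set.Icc (0:ℝ) 1 := ⟨ht0.le, ht1⟩
        have hrecover : (1 - t) / t = (x:ℝ) := by
          rw [htdef]
          field_simp
          ring
        have hkt : (if t ≤ 0 then L else f (Real.toNNReal ((1 - t) / t))) = f x := by
          rw [if_neg (not_le.mpr ht0), hrecover, Real.toNNReal_coe]
        have hgt : (Polynomial.aeval f1 p) x = Polynomial.eval t p := by
          rw [heval p x]
          congr 1
        have := hp t htmem
        rw [hkt] at this
        rw [Real.dist_eq, hgt, abs_sub_comm]
        exact (le_of_lt this)
      linarith [hdle]
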